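/- Let Ω ⊂ ℝ^d be a bounded open set and c₀, c₁ > 0. Then there exists a constant C > 0, depending only on c₀, c₁, d and the Lebesgue measure of Ω, with the following property: for every ε ∈ (0, 1], every δ > 0, every measurable set M ⊂ Ω with Lebesgue measure 𝓛(M) ≤ c₀·δ, every measurable weight μ : Ω → ℝ satisfying μ(x) ≥ ε^{-1} for a.e. x ∈ Ω \ M and μ(x) ≥ c₁·δ for a.e. x ∈ M, and every continuously differentiable function v : Ω → ℝ, one has C·( ∫_Ω |∇v(x)| dx )² ≤ ∫_Ω μ(x)·|∇v(x)|² dx, where |∇v| denotes the Euclidean norm of the gradient. (This is the weighted lower bound C‖∇v‖²_{L¹(Ω)} ≤ B_{ε,δ}[v,v] underlying the first estimate of Theorem 3 on the lower bound for the first eigenvalue.) -/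

import Mathlib

open Metric Set MeasureTheory
open scoped ENNReal

noncomputable section

/-- `ℝ^n` with the Euclidean norm. -/
abbrev Euc (n : ℕ) := EuclideanSpace ℝ (Fin n)

/-- Weighted lower bound `C ‖∇v‖²_{L¹(Ω)} ≤ B_{ε,δ}[v,v]`: for a bounded
open `Ω ⊆ ℝ^d` and `c₀, c₁ > 0` there is `C > 0` such that for all `ε ∈ (0,1]`, `δ > 0`,
every measurable `M ⊆ Ω` with `𝓛(M) ≤ c₀ δ`, every measurable weight `μ` with
`μ ≥ ε⁻¹` a.e. on `Ω \ M` and `μ ≥ c₁ δ` a.e. on `M`, and every `C¹` function `v` on `Ω`,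
`C (∫_Ω |∇v|)² ≤ ∫_Ω μ |∇v|²`. -/
theorem weighted_gradient_L1_lower_bound
    (d : ℕ) (Ω : Set (Euc d)) (hΩo : IsOpen Ω) (hΩb : Bornology.IsBounded Ω)
    (c₀ c₁ : ℝ) (hc₀ : 0 < c₀) (hc₁ : 0 < c₁) :
    ∃ C > 0, ∀ ε ∈ Set.Ioc (0 : ℝ) 1, ∀ δ : ℝ, 0 < δ →
      ∀ M : Set (Euc d), MeasurableSet M → M ⊆ Ω →
        volume M ≤ ENNReal.ofReal (c₀ * δ) →
      ∀ μ : Euc d → ℝ, Measurable μ →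
        (∀ᵐ x, x ∈ Ω \ M → ε⁻¹ ≤ μ x) →
        (∀ᵐ x, x ∈ M → c₁ * δ ≤ μ x) →
      ∀ v : Euc d → ℝ, ContDiffOn ℝ 1 v Ω →
        ENNReal.ofReal C * (∫⁻ x in Ω, ENNReal.ofReal ‖gradient v x‖) ^ 2 ≤
          ∫⁻ x in Ω, ENNReal.ofReal (μ x * ‖gradient v x‖ ^ 2) := by
  have hΩm : MeasurableSet Ω := hΩo.measurableSet
  have hΩfin : volume Ω < ⊤ := hΩb.measure_lt_top
  set K : ℝ := (volume Ω).toReal + c₀ / c₁ with hKdef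
  have hKpos : 0 < K := by positivity
  refine ⟨K⁻¹, by positivity, ?_⟩
  intro ε hε δ hδ M hMmeas hMΩ hMvol μ hμmeas hμ1 hμ2 v hv
  -- notation
  set a : Euc d → ℝ≥0∞ := fun x => ENNReal.ofReal (μ x) with ha
  set w : Euc d → ℝ≥0∞ := fun x => ENNReal.ofReal ‖gradient v x‖ with hw
  have hameas : Measurable a := hμmeas.ennreal_ofReal
  have hgradmeas : Measurable (gradient v) := by
    have : Measurable (fderiv ℝ v) := measurable_fderiv ℝ v
    exact ((InnerProductSpace.toDual ℝ (Euc d)).symm.continuous.measurable).comp this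
  have hwmeas : Measurable w := (hgradmeas.norm).ennreal_ofReal
  -- a.e. positivity of μ on Ω
  have hεinv : (0:ℝ) < ε⁻¹ := inv_pos.mpr hε.1
  have hc₁δ : (0:ℝ) < c₁ * δ := by positivity
  have hpos : ∀ᵐ x ∂(volume.restrict Ω), 0 < μ x := by
    rw [ae_restrict_iff' hΩm]
    filter_upwards [hμ1, hμ2] with x h1 h2 hx
    by_cases hxM : x ∈ M
    · exact lt_of_lt_of_le hc₁δ (h2 hxM)
    · exact lt_of_lt_of_le hεinv (h1 ⟨hx, hxM⟩)
  have hane : ∀ᵐ x ∂(volume.restrict Ω), a x ≠ 0 ∧ a x ≠ ⊤ := by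
    filter_upwards [hpos] with x hx
    exact ⟨by simpa [ha, ENNReal.ofReal_pos] using hx, ENNReal.ofReal_ne_top⟩
  -- Cauchy–Schwarz setup
  set f : Euc d → ℝ≥0∞ := fun x => a x ^ (-(1/2) : ℝ) with hf
  set g : Euc d → ℝ≥0∞ := fun x => a x ^ ((1/2) : ℝ) * w x with hg
  have hfm : AEMeasurable f (volume.restrict Ω) :=
    (hameas.pow_const _).aemeasurable
  have hgm : AEMeasurable g (volume.restrict Ω) :=
    ((hameas.pow_const _).mul hwmeas).aemeasurable
  have hpq : Real.HolderConjugate 2 2 := by rw [Real.holderConjugate_iff]; norm_num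
  have holder := ENNReal.lintegral_mul_le_Lp_mul_Lq (volume.restrict Ω) hpq hfm hgm
  -- w = f * g a.e.
  have hwfg : ∫⁻ x in Ω, w x = ∫⁻ x in Ω, (f * g) x := by
    refine lintegral_congr_ae ?_
    filter_upwards [hane] with x ⟨h0, htop⟩
    simp only [Pi.mul_apply, hf, hg, ← mul_assoc]
    rw [← ENNReal.rpow_add _ _ h0 htop]
    norm_num
  -- f ^ 2 = a⁻¹
  have hf2 : ∫⁻ x in Ω, f x ^ (2:ℝ) = ∫⁻ x in Ω, (a x)⁻¹ := by
    refine lintegral_congr fun x => ?_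
    show (a x ^ (-(1/2) : ℝ)) ^ (2:ℝ) = (a x)⁻¹
    rw [← ENNReal.rpow_mul]
    norm_num [ENNReal.rpow_neg_one]
  -- g ^ 2 = a * w ^ 2
  have hg2 : ∫⁻ x in Ω, g x ^ (2:ℝ) = ∫⁻ x in Ω, a x * w x ^ 2 := by
    refine lintegral_congr fun x => ?_
    show (a x ^ ((1/2) : ℝ) * w x) ^ (2:ℝ) = a x * w x ^ 2
    rw [ENNReal.mul_rpow_of_nonneg _ _ (by norm_num : (0:ℝ) ≤ 2),
      ← ENNReal.rpow_mul, show ((2:ℝ)) = ((2:ℕ):ℝ) from by norm_num,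
      ENNReal.rpow_natCast]
    norm_num
  -- bound ∫ a⁻¹ by K
  have hinv_bound : ∫⁻ x in Ω, (a x)⁻¹ ≤ ENNReal.ofReal K := by
    have hsplit : ∫⁻ x in Ω, (a x)⁻¹ =
        (∫⁻ x in Ω \ M, (a x)⁻¹) + ∫⁻ x in M, (a x)⁻¹ := by
      rw [← lintegral_union (hMmeas) (disjoint_sdiff_left),
        Set.diff_union_of_subset hMΩ]
    rw [hsplit]
    have h1 : (∫⁻ x in Ω \ M, (a x)⁻¹) ≤ volume Ω := by
      calc (∫⁻ x in Ω \ M, (a x)⁻¹) ≤ ∫⁻ _ in Ω \ M, 1 := by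
            refine lintegral_mono_ae ?_
            rw [ae_restrict_iff' (hΩm.diff hMmeas)]
            filter_upwards [hμ1] with x h1 hx
            have hμx : ε⁻¹ ≤ μ x := h1 hx
            have : ENNReal.ofReal ε⁻¹ ≤ a x := ENNReal.ofReal_le_ofReal hμx
            calc (a x)⁻¹ ≤ (ENNReal.ofReal ε⁻¹)⁻¹ := ENNReal.inv_le_inv' this
              _ = ENNReal.ofReal ε := by
                  rw [ENNReal.ofReal_inv_of_pos hε.1, inv_inv]
              _ ≤ 1 := by
                  simpa using ENNReal.ofReal_le_ofReal hε.2
        _ = volume (Ω \ M) := by simp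
        _ ≤ volume Ω := measure_mono Set.diff_subset
    have h2 : (∫⁻ x in M, (a x)⁻¹) ≤ ENNReal.ofReal (c₀ / c₁) := by
      calc (∫⁻ x in M, (a x)⁻¹) ≤ ∫⁻ _ in M, ENNReal.ofReal (c₁ * δ)⁻¹ := by
            refine lintegral_mono_ae ?_
            rw [ae_restrict_iff' hMmeas]
            filter_upwards [hμ2] with x h2 hx
            have hμx : c₁ * δ ≤ μ x := h2 hx
            calc (a x)⁻¹ ≤ (ENNReal.ofReal (c₁ * δ))⁻¹ :=
                  ENNReal.inv_le_inv' (ENNReal.ofReal_le_ofReal hμx)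
              _ = ENNReal.ofReal (c₁ * δ)⁻¹ :=
                  (ENNReal.ofReal_inv_of_pos hc₁δ).symm
        _ = volume M * ENNReal.ofReal (c₁ * δ)⁻¹ := by
            rw [lintegral_const, Measure.restrict_apply MeasurableSet.univ,
              Set.univ_inter, mul_comm]
        _ ≤ ENNReal.ofReal (c₀ * δ) * ENNReal.ofReal (c₁ * δ)⁻¹ :=
            mul_le_mul_left hMvol _
        _ = ENNReal.ofReal (c₀ * δ * (c₁ * δ)⁻¹) :=
            (ENNReal.ofReal_mul (by positivity)).symm
        _ = ENNReal.ofReal (c₀ / c₁) := by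
            congr 1
            field_simp
    calc (∫⁻ x in Ω \ M, (a x)⁻¹) + ∫⁻ x in M, (a x)⁻¹
        ≤ volume Ω + ENNReal.ofReal (c₀ / c₁) := add_le_add h1 h2
      _ = ENNReal.ofReal K := by
          rw [hKdef, ENNReal.ofReal_add (ENNReal.toReal_nonneg) (by positivity),
            ENNReal.ofReal_toReal hΩfin.ne]
  -- combine Hölder
  have key : (∫⁻ x in Ω, w x) ^ 2 ≤
      (∫⁻ x in Ω, (a x)⁻¹) * ∫⁻ x in Ω, a x * w x ^ 2 := by
    calc (∫⁻ x in Ω, w x) ^ 2 = (∫⁻ x in Ω, (f * g) x) ^ 2 := by rw [hwfg]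
      _ ≤ ((∫⁻ x in Ω, f x ^ (2:ℝ)) ^ ((1:ℝ)/2) *
            (∫⁻ x in Ω, g x ^ (2:ℝ)) ^ ((1:ℝ)/2)) ^ 2 := by
          exact pow_le_pow_left' holder 2
      _ = (∫⁻ x in Ω, f x ^ (2:ℝ)) * ∫⁻ x in Ω, g x ^ (2:ℝ) := by
          rw [mul_pow, ← ENNReal.rpow_natCast (_ ^ ((1:ℝ)/2)) 2,
            ← ENNReal.rpow_natCast (_ ^ ((1:ℝ)/2)) 2,
            ← ENNReal.rpow_mul, ← ENNReal.rpow_mul]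
          norm_num
      _ = (∫⁻ x in Ω, (a x)⁻¹) * ∫⁻ x in Ω, a x * w x ^ 2 := by rw [hf2, hg2]
  -- identify RHS
  have hRHS : ∫⁻ x in Ω, a x * w x ^ 2 =
      ∫⁻ x in Ω, ENNReal.ofReal (μ x * ‖gradient v x‖ ^ 2) := by
    refine lintegral_congr_ae ?_
    filter_upwards [hpos] with x hx
    rw [ENNReal.ofReal_mul hx.le, ha, hw, ← ENNReal.ofReal_pow (norm_nonneg _)]
  calc ENNReal.ofReal K⁻¹ * (∫⁻ x in Ω, w x) ^ 2
      ≤ ENNReal.ofReal K⁻¹ * ((∫⁻ x in Ω, (a x)⁻¹) * ∫⁻ x in Ω, a x * w x ^ 2) :=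
        mul_le_mul_right key _
    _ ≤ ENNReal.ofReal K⁻¹ * (ENNReal.ofReal K * ∫⁻ x in Ω, a x * w x ^ 2) :=
        mul_le_mul_right (mul_le_mul_left hinv_bound _) _
    _ = ENNReal.ofReal (K⁻¹ * K) * ∫⁻ x in Ω, a x * w x ^ 2 := by
        rw [← mul_assoc, ← ENNReal.ofReal_mul (by positivity)]
    _ = ∫⁻ x in Ω, ENNReal.ofReal (μ x * ‖gradient v x‖ ^ 2) := by
        rw [inv_mul_cancel₀ hKpos.ne', ENNReal.ofReal_one, one_mul, hRHS]
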